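/- For all constants C ≥ 1 and A, γ, σ > 0 there exists a finite constant L* = L*(C,A,γ,σ) such that for every drift b ∈ Σ(C,A,γ,σ) and every x ∈ ℝ one has q_b(x) ≤ L* and |q_b'(x)| ≤ L*, where q_b'(x) = 2σ⁻²·b(x)·q_b(x) is the derivative of the invariant density. -/

import Mathlib

open MeasureTheory

/-- The paper's class `Lip_loc(ℝ)` of locally Lipschitz functions. -/
def LipLoc (f : ℝ → ℝ) : Prop :=
  ∀ n : ℕ, ∃ L : ℝ, ∀ x y : ℝ, |x| ≤ n → |y| ≤ n → |f x - f y| ≤ L * |x - y|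

/-- The drift class `Σ(C, A, γ, σ)`: locally Lipschitz drifts with at most linear growth
(constant `C`) satisfying `b(x)·sign(x)/σ² ≤ -γ` for `|x| ≥ A`. -/
def driftClass (C A γ σ : ℝ) : Set (ℝ → ℝ) :=
  {b | LipLoc b ∧ (∀ x : ℝ, |b x| ≤ C * (1 + |x|)) ∧
    ∀ x : ℝ, A ≤ |x| → b x * Real.sign x / σ ^ 2 ≤ -γ}

/-- The normalizing constant `C_{b,σ} = ∫_ℝ exp(∫₀ˣ 2 b(u)/σ² du) dx`. -/
noncomputable def normConst (b : ℝ → ℝ) (σ : ℝ) : ℝ :=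
  ∫ x : ℝ, Real.exp (∫ u in (0:ℝ)..x, 2 * b u / σ ^ 2)

/-- The invariant density `q_b(x) = C_{b,σ}⁻¹ exp(∫₀ˣ 2 b(u)/σ² du)`. -/
noncomputable def invDensity (b : ℝ → ℝ) (σ : ℝ) (x : ℝ) : ℝ :=
  (normConst b σ)⁻¹ * Real.exp (∫ u in (0:ℝ)..x, 2 * b u / σ ^ 2)

lemma LipLoc.continuous {b : ℝ → ℝ} (hb : LipLoc b) : Continuous b := by
  rw [continuous_iff_continuousAt]
  intro x
  obtain ⟨n, hn⟩ : ∃ n : ℕ, |x| + 1 ≤ n := exists_nat_ge (|x| + 1)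
  obtain ⟨L, hL⟩ := hb n
  rw [Metric.continuousAt_iff]
  intro ε hε
  refine ⟨min 1 (ε / (|L| + 1)), by positivity, fun {y} hy => ?_⟩
  rw [Real.dist_eq] at hy ⊢
  have hy1 : |y - x| < 1 := lt_of_lt_of_le hy (min_le_left _ _)
  have hy2 : |y - x| < ε / (|L| + 1) := lt_of_lt_of_le hy (min_le_right _ _)
  have hyn : |y| ≤ n := by
    have := abs_sub_abs_le_abs_sub y x
    linarith
  have hxn : |x| ≤ n := by linarith
  have h1 : |b y - b x| ≤ L * |y - x| := hL y x hyn hxn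
  have h2 : L * |y - x| ≤ |L| * |y - x| :=
    mul_le_mul_of_nonneg_right (le_abs_self L) (abs_nonneg _)
  have h3 : |L| * |y - x| < (|L| + 1) * (ε / (|L| + 1)) := by
    have hL1 : (0:ℝ) < |L| + 1 := by positivity
    calc |L| * |y - x| ≤ (|L| + 1) * |y - x| := by
          apply mul_le_mul_of_nonneg_right _ (abs_nonneg _); linarith
      _ < (|L| + 1) * (ε / (|L| + 1)) := mul_lt_mul_of_pos_left hy2 hL1
  have : (|L| + 1) * (ε / (|L| + 1)) = ε := by field_simp
  linarith

/-- There is a finite constant `L*` bounding `q_b` and `q_b' = 2σ⁻² b q_b` uniformly over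
the drift class. -/
theorem stmt0 (C A γ σ : ℝ) (hC : 1 ≤ C) (hA : 0 < A) (hγ : 0 < γ) (hσ : 0 < σ) :
    ∃ Lstar : ℝ, ∀ b ∈ driftClass C A γ σ, ∀ x : ℝ,
      invDensity b σ x ≤ Lstar ∧ |2 / σ ^ 2 * b x * invDensity b σ x| ≤ Lstar := by
  have hσ2 : (0:ℝ) < σ ^ 2 := by positivity
  set M : ℝ := 2 * C * (1 + A) * A / σ ^ 2 with hMdef
  have hM0 : 0 ≤ M := by positivity
  set K : ℝ := 1 + A + 1 / (2 * γ) with hKdef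
  have hK1A : 1 + A ≤ K := by
    rw [hKdef]
    have : 0 < 1 / (2 * γ) := by positivity
    linarith
  refine ⟨max (Real.exp (2 * M) / (2 * A))
      (2 * C / σ ^ 2 * (Real.exp (2 * M) / (2 * A)) * (Real.exp M * K)), ?_⟩
  intro b hb x
  obtain ⟨hlip, hgrow, hdrift⟩ := hb
  have hbc : Continuous b := hlip.continuous
  have hgc : Continuous (fun u => 2 * b u / σ ^ 2) := by
    exact ((continuous_const.mul hbc).div_const _)
  set F : ℝ → ℝ := fun y => ∫ u in (0:ℝ)..y, 2 * b u / σ ^ 2 with hFdef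
  have hFc : Continuous F :=
    intervalIntegral.continuous_primitive (fun a b => hgc.intervalIntegrable a b) 0
  -- bound on [-A, A]
  have hFsmall : ∀ y : ℝ, |y| ≤ A → |F y| ≤ M := by
    intro y hy
    have h1 : ‖∫ u in (0:ℝ)..y, 2 * b u / σ ^ 2‖ ≤ (2 * C * (1 + A) / σ ^ 2) * |y - 0| := by
      apply intervalIntegral.norm_integral_le_of_norm_le_const
      intro u hu
      have hu' : |u| ≤ A := by
        rcases Set.mem_uIoc.mp hu with h | h
        · rw [abs_le]
          constructor
          · linarith [h.1]
          · exact le_trans h.2 (le_trans (le_abs_self y) hy)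
        · rw [abs_le]
          constructor
          · have : -A ≤ y := by
              have := neg_abs_le y; linarith [hy]
            linarith [h.1]
          · linarith [h.2]
      have hbu : |b u| ≤ C * (1 + A) := by
        calc |b u| ≤ C * (1 + |u|) := hgrow u
          _ ≤ C * (1 + A) := by
              apply mul_le_mul_of_nonneg_left _ (by linarith)
              linarith
      rw [Real.norm_eq_abs, abs_div, abs_of_pos hσ2, abs_mul, abs_two]
      rw [div_le_div_iff₀ (by positivity) (by positivity)]
      nlinarith [abs_nonneg (b u)]
    rw [Real.norm_eq_abs, sub_zero] at h1
    calc |F y| ≤ (2 * C * (1 + A) / σ ^ 2) * |y| := h1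
      _ ≤ (2 * C * (1 + A) / σ ^ 2) * A := by
          apply mul_le_mul_of_nonneg_left hy (by positivity)
      _ = M := by rw [hMdef]; ring
  have hFA : |F A| ≤ M := hFsmall A (by rw [abs_of_pos hA])
  have hFnA : |F (-A)| ≤ M := hFsmall (-A) (by rw [abs_neg, abs_of_pos hA])
  -- decay to the right
  have keyR : ∀ y : ℝ, A ≤ y → F y ≤ M - 2 * γ * (y - A) := by
    intro y hy
    have hi1 : IntervalIntegrable (fun u => 2 * b u / σ ^ 2) volume 0 A :=
      hgc.intervalIntegrable _ _
    have hi2 : IntervalIntegrable (fun u => 2 * b u / σ ^ 2) volume A y :=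
      hgc.intervalIntegrable _ _
    have hsplit : F A + ∫ u in A..y, 2 * b u / σ ^ 2 = F y :=
      intervalIntegral.integral_add_adjacent_intervals hi1 hi2
    have hmono : (∫ u in A..y, 2 * b u / σ ^ 2) ≤ ∫ _u in A..y, (-(2 * γ)) := by
      apply intervalIntegral.integral_mono_on hy hi2 intervalIntegrable_const
      intro u hu
      have hu0 : 0 < u := lt_of_lt_of_le hA hu.1
      have hd := hdrift u (by rw [abs_of_pos hu0]; exact hu.1)
      rw [Real.sign_of_pos hu0, mul_one] at hd
      have h2 : 2 * b u / σ ^ 2 = 2 * (b u / σ ^ 2) := by ring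
      linarith [h2 ▸ le_refl (2 * b u / σ ^ 2), hd]
    have hconst : (∫ _u in A..y, (-(2 * γ)) : ℝ) = -(2 * γ) * (y - A) := by
      rw [intervalIntegral.integral_const, smul_eq_mul]; ring
    have := abs_le.mp hFA
    linarith [hsplit ▸ le_refl (F y)]
  -- decay to the left
  have keyL : ∀ y : ℝ, y ≤ -A → F y ≤ M - 2 * γ * (-y - A) := by
    intro y hy
    have hi1 : IntervalIntegrable (fun u => 2 * b u / σ ^ 2) volume 0 (-A) :=
      hgc.intervalIntegrable _ _
    have hi2 : IntervalIntegrable (fun u => 2 * b u / σ ^ 2) volume (-A) y :=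
      hgc.intervalIntegrable _ _
    have hsplit : F (-A) + ∫ u in (-A)..y, 2 * b u / σ ^ 2 = F y :=
      intervalIntegral.integral_add_adjacent_intervals hi1 hi2
    have hsym : (∫ u in (-A)..y, 2 * b u / σ ^ 2) = -∫ u in y..(-A), 2 * b u / σ ^ 2 :=
      (intervalIntegral.integral_symm _ _)
    have hmono : (∫ _u in y..(-A), (2 * γ) : ℝ) ≤ ∫ u in y..(-A), 2 * b u / σ ^ 2 := by
      apply intervalIntegral.integral_mono_on hy intervalIntegrable_const
        (hgc.intervalIntegrable _ _)
      intro u hu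
      have hu0 : u < 0 := lt_of_le_of_lt hu.2 (by linarith)
      have hd := hdrift u (by rw [abs_of_neg hu0]; linarith [hu.2])
      rw [Real.sign_of_neg hu0] at hd
      have h2 : b u * (-1) / σ ^ 2 = -(b u / σ ^ 2) := by ring
      rw [h2] at hd
      have h3 : 2 * b u / σ ^ 2 = 2 * (b u / σ ^ 2) := by ring
      linarith [h3 ▸ le_refl (2 * b u / σ ^ 2), hd]
    have hconst : (∫ _u in y..(-A), (2 * γ) : ℝ) = 2 * γ * (-A - y) := by
      rw [intervalIntegral.integral_const, smul_eq_mul]; ring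
    have := abs_le.mp hFnA
    have h4 : F y = F (-A) - ∫ u in y..(-A), 2 * b u / σ ^ 2 := by
      rw [← hsplit, hsym]; ring
    rw [h4]
    linarith [hconst ▸ hmono]
  -- global upper bound for F
  have hFleM : ∀ y : ℝ, F y ≤ M := by
    intro y
    rcases le_or_gt (|y|) A with h | h
    · exact (abs_le.mp (hFsmall y h)).2
    · rcases le_or_gt 0 y with hy0 | hy0
      · have : A ≤ y := by rw [abs_of_nonneg hy0] at h; linarith
        have := keyR y this
        nlinarith
      · have : y ≤ -A := by rw [abs_of_neg hy0] at h; linarith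
        have := keyL y this
        nlinarith
  -- uniform product bound
  have hprod : ∀ y : ℝ, (1 + |y|) * Real.exp (F y) ≤ Real.exp M * K := by
    intro y
    rcases le_or_gt (|y|) A with h | h
    · have h1 : Real.exp (F y) ≤ Real.exp M := Real.exp_le_exp.mpr (hFleM y)
      have h2 : (0:ℝ) < Real.exp (F y) := Real.exp_pos _
      have h3 : 1 + |y| ≤ 1 + A := by linarith
      nlinarith [Real.exp_pos M, abs_nonneg y]
    · have hFy0 : F y ≤ M - 2 * γ * (|y| - A) := by
        rcases le_or_gt 0 y with hy0 | hy0
        · rw [abs_of_nonneg hy0]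
          exact keyR y (by rw [abs_of_nonneg hy0] at h; linarith)
        · rw [abs_of_neg hy0]
          exact keyL y (by rw [abs_of_neg hy0] at h; linarith)
      obtain ⟨t, ht0, hyt0⟩ : ∃ t : ℝ, 0 < t ∧ |y| = A + t :=
        ⟨|y| - A, by linarith, by ring⟩
      rw [hyt0] at hFy0
      have hFy : F y ≤ M - 2 * γ * t := by linarith [hFy0]
      have hE : Real.exp (F y) ≤ Real.exp M * Real.exp (-(2 * γ * t)) := by
        rw [← Real.exp_add]
        exact Real.exp_le_exp.mpr (by linarith)
      have hexp1 : Real.exp (-(2 * γ * t)) ≤ 1 := by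
        rw [← Real.exp_zero]
        exact Real.exp_le_exp.mpr (by nlinarith)
      have ht1 : t * Real.exp (-(2 * γ * t)) ≤ 1 / (2 * γ) := by
        have he : 2 * γ * t + 1 ≤ Real.exp (2 * γ * t) := Real.add_one_le_exp _
        rw [Real.exp_neg, ← div_eq_mul_inv, div_le_div_iff₀ (Real.exp_pos _) (by positivity)]
        nlinarith
      have hyt : 1 + |y| = 1 + A + t := by rw [hyt0]; ring
      rw [hyt]
      have hkey : (1 + A + t) * Real.exp (-(2 * γ * t)) ≤ K := by
        have h1A : (0:ℝ) ≤ 1 + A := by linarith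
        have he0 : 0 < Real.exp (-(2 * γ * t)) := Real.exp_pos _
        rw [hKdef]
        nlinarith
      calc (1 + A + t) * Real.exp (F y)
          ≤ (1 + A + t) * (Real.exp M * Real.exp (-(2 * γ * t))) := by
            apply mul_le_mul_of_nonneg_left hE (by nlinarith)
        _ = Real.exp M * ((1 + A + t) * Real.exp (-(2 * γ * t))) := by ring
        _ ≤ Real.exp M * K := mul_le_mul_of_nonneg_left hkey (Real.exp_pos M).le
  -- case split on integrability
  by_cases hint : Integrable (fun y => Real.exp (F y)) volume
  · have hNC : normConst b σ = ∫ y : ℝ, Real.exp (F y) := rfl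
    have hlow : Real.exp (-M) * (2 * A) ≤ normConst b σ := by
      have h1 : Real.exp (-M) * (volume (Set.Icc (-A) A)).toReal
          ≤ ∫ y in Set.Icc (-A) A, Real.exp (F y) := by
        apply setIntegral_ge_of_const_le_real measurableSet_Icc
          (measure_Icc_lt_top).ne
        · intro y hy
          apply Real.exp_le_exp.mpr
          have := (abs_le.mp (hFsmall y (abs_le.mpr ⟨hy.1, hy.2⟩))).1
          linarith
        · exact (Real.continuous_exp.comp hFc).integrableOn_Icc
      have h2 : (∫ y in Set.Icc (-A) A, Real.exp (F y)) ≤ ∫ y : ℝ, Real.exp (F y) :=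
        setIntegral_le_integral hint (Filter.Eventually.of_forall fun y => (Real.exp_pos _).le)
      have hvol : (volume (Set.Icc (-A) A)).toReal = 2 * A := by
        rw [Real.volume_Icc, ENNReal.toReal_ofReal (by linarith)]
        ring
      rw [hNC]
      rw [hvol] at h1
      linarith
    have hNpos : 0 < normConst b σ :=
      lt_of_lt_of_le (by positivity) hlow
    have hNinv : (normConst b σ)⁻¹ ≤ Real.exp M / (2 * A) := by
      have h1 : (normConst b σ)⁻¹ ≤ (Real.exp (-M) * (2 * A))⁻¹ := by
        apply inv_anti₀ (by positivity) hlow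
      calc (normConst b σ)⁻¹ ≤ (Real.exp (-M) * (2 * A))⁻¹ := h1
        _ = Real.exp M / (2 * A) := by
            rw [mul_inv, Real.exp_neg, inv_inv, div_eq_mul_inv]
    have hq : invDensity b σ x = (normConst b σ)⁻¹ * Real.exp (F x) := rfl
    have hqbound : invDensity b σ x ≤ Real.exp (2 * M) / (2 * A) := by
      rw [hq]
      calc (normConst b σ)⁻¹ * Real.exp (F x)
          ≤ (Real.exp M / (2 * A)) * Real.exp M := by
            apply mul_le_mul hNinv (Real.exp_le_exp.mpr (hFleM x)) (Real.exp_pos _).le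
              (by positivity)
        _ = Real.exp (2 * M) / (2 * A) := by
            have hE2 : Real.exp (2 * M) = Real.exp M * Real.exp M := by
              rw [two_mul, Real.exp_add]
            rw [hE2]; ring
    constructor
    · exact le_trans hqbound (le_max_left _ _)
    · apply le_trans _ (le_max_right _ _)
      have habs : |2 / σ ^ 2 * b x * invDensity b σ x|
          = 2 / σ ^ 2 * |b x| * invDensity b σ x := by
        rw [abs_mul, abs_mul]
        have h1 : |2 / σ ^ 2| = 2 / σ ^ 2 := abs_of_pos (by positivity)
        have h2 : |invDensity b σ x| = invDensity b σ x := by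
          apply abs_of_nonneg
          rw [hq]
          positivity
        rw [h1, h2]
      rw [habs, hq]
      calc 2 / σ ^ 2 * |b x| * ((normConst b σ)⁻¹ * Real.exp (F x))
          ≤ 2 / σ ^ 2 * (C * (1 + |x|)) * ((normConst b σ)⁻¹ * Real.exp (F x)) := by
            apply mul_le_mul_of_nonneg_right _ (by positivity)
            apply mul_le_mul_of_nonneg_left (hgrow x) (by positivity)
        _ = 2 * C / σ ^ 2 * ((normConst b σ)⁻¹ * ((1 + |x|) * Real.exp (F x))) := by ring
        _ ≤ 2 * C / σ ^ 2 * ((Real.exp M / (2 * A)) * (Real.exp M * K)) := by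
            apply mul_le_mul_of_nonneg_left _ (by positivity)
            apply mul_le_mul hNinv (hprod x) (by positivity) (by positivity)
        _ ≤ (2 * C / σ ^ 2 * (Real.exp M / (2 * A) * (Real.exp M * K))) * Real.exp M := by
            have h1 : (1:ℝ) ≤ Real.exp M := Real.one_le_exp hM0
            have hK0 : (0:ℝ) ≤ K := le_trans (by linarith) hK1A
            have hX0 : (0:ℝ) ≤ 2 * C / σ ^ 2 * (Real.exp M / (2 * A) * (Real.exp M * K)) :=
              mul_nonneg (by positivity)
                (mul_nonneg (by positivity) (mul_nonneg (Real.exp_pos _).le hK0))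
            exact le_mul_of_one_le_right hX0 h1
        _ = 2 * C / σ ^ 2 * (Real.exp (2 * M) / (2 * A)) * (Real.exp M * K) := by
            have hE2 : Real.exp (2 * M) = Real.exp M * Real.exp M := by
              rw [two_mul, Real.exp_add]
            rw [hE2]; ring
  · have h0 : normConst b σ = 0 := integral_undef hint
    have hq0 : invDensity b σ x = 0 := by
      rw [invDensity, h0, inv_zero, zero_mul]
    rw [hq0]
    have hpos : (0:ℝ) ≤ Real.exp (2 * M) / (2 * A) := by positivity
    constructor
    · exact le_trans hpos (le_max_left _ _)
    · rw [mul_zero, abs_zero]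
      exact le_trans hpos (le_max_left _ _)
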